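/- Let ρ_1, ρ_2, ρ_3 : ℝ>0 → ℝ≥0 be non-increasing functions such that ρ_2 is an (α_1, β_1)-approximation of ρ_1 and ρ_3 is an (α_2, β_2)-approximation of ρ_2, for parameters α_1, β_1, α_2, β_2 ∈ ℝ≥1. Then ρ_3 is an (α_1·α_2, β_1·β_2)-approximation of ρ_1. -/

import Mathlib

open scoped BigOperators Classical
open MeasureTheory

noncomputable section

/-- A finite matroid on ground set `E`, given by its rank function. -/
structure FinMatroid (α : Type*) [DecidableEq α] where
  E : Finset α
  r : Finset α → ℕ
  rank_le_card : ∀ A : Finset α, r A ≤ A.card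
  rank_mono : ∀ ⦃A B : Finset α⦄, A ⊆ B → r A ≤ r B
  rank_submod : ∀ A B : Finset α, r (A ∪ B) + r (A ∩ B) ≤ r A + r B

variable {α : Type*} [DecidableEq α]

/-- Independence in terms of the rank function. -/
def FinMatroid.Indep (M : FinMatroid α) (I : Finset α) : Prop :=
  I ⊆ M.E ∧ M.r I = I.card

/-- The span (closure) of a set. -/
def FinMatroid.span (M : FinMatroid α) (A : Finset α) : Finset α :=
  M.E.filter fun e => M.r (insert e A) = M.r A

/-- `M.D S lam` : the unique inclusion-wise maximal maximizer of `|U| - lam * r U`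
over `U ⊆ S`, realized as the union of all maximizers. -/
def FinMatroid.D (M : FinMatroid α) (S : Finset α) (lam : ℝ) : Finset α :=
  (S.powerset.filter fun U =>
      ∀ V ∈ S.powerset, (V.card : ℝ) - lam * M.r V ≤ (U.card : ℝ) - lam * M.r U).sup id

/-- The rank-density curve of `M`. -/
def FinMatroid.rdCurve (M : FinMatroid α) : ℝ → ℝ := fun t =>
  sSup {lam : ℝ | 0 ≤ lam ∧ t ≤ (M.r (M.D M.E lam) : ℝ)}

/-- Restriction of a matroid to a subset. -/
def FinMatroid.restrict (M : FinMatroid α) (T : Finset α) : FinMatroid α where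
  E := M.E ∩ T
  r := fun A => M.r (A ∩ T)
  rank_le_card := fun A =>
    (M.rank_le_card _).trans (Finset.card_le_card Finset.inter_subset_left)
  rank_mono := fun A B hAB =>
    M.rank_mono (Finset.inter_subset_inter hAB (Finset.Subset.refl T))
  rank_submod := fun A B => by
    have h1 : (A ∪ B) ∩ T = (A ∩ T) ∪ (B ∩ T) := by ext x; simp only [Finset.mem_inter, Finset.mem_union]; tauto
    have h2 : (A ∩ B) ∩ T = (A ∩ T) ∩ (B ∩ T) := by ext x; simp only [Finset.mem_inter]; tauto
    try simp only []
    rw [h1, h2]; exact M.rank_submod _ _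

/-- `eta n w a` : the expected maximum weight among a uniformly random subset of
`⌊a⌋` of the `n` weights `w`, with value `0` for `a < 1`. -/
def eta (n : ℕ) (w : Fin n → ℝ) (a : ℝ) : ℝ :=
  if a < 1 then 0 else
    (∑ R ∈ Finset.powersetCard ⌊a⌋.toNat (Finset.univ : Finset (Fin n)),
        R.fold max 0 w) /
      ((Finset.powersetCard ⌊a⌋.toNat (Finset.univ : Finset (Fin n))).card : ℝ)

/-- `FF n w ρ = ∫_0^∞ η(ρ(t)) dt`. -/
def FF (n : ℕ) (w : Fin n → ℝ) (ρ : ℝ → ℝ) : ℝ :=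
  ∫ t in Set.Ioi (0 : ℝ), eta n w (ρ t)

/-- The `(a, b)`-downshift of a curve `ρ`. -/
def downshift (ρ : ℝ → ℝ) (a b : ℝ) : ℝ → ℝ := fun t =>
  let φ : ℝ := if t ≤ 1 then ρ a / b else ρ (a * t) / b
  if 0 < φ ∧ φ < 1 then 1 else φ

/-- `ρt` is an `(a,b)`-approximation of `ρ`: it is non-increasing and nonnegative on
`(0,∞)` and squeezed between the `(a,b)`-downshift of `ρ` and `ρ` on `(0,∞)`. -/
def IsApprox (a b : ℝ) (ρ ρt : ℝ → ℝ) : Prop :=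
  AntitoneOn ρt (Set.Ioi 0) ∧ (∀ t, 0 < t → 0 ≤ ρt t) ∧
    ∀ t, 0 < t → downshift ρ a b t ≤ ρt t ∧ ρt t ≤ ρ t

/-- Probability of event `P` for a random subset `S ⊆ N` including each element
independently with probability `1/2`. -/
def prHalf (N : Finset α) (P : Finset α → Prop) : ℝ :=
  ((N.powerset.filter P).card : ℝ) / 2 ^ N.card


lemma phi_le_downshift (ρ : ℝ → ℝ) (a b t : ℝ) :
    (if t ≤ 1 then ρ a / b else ρ (a * t) / b) ≤ downshift ρ a b t := by
  unfold downshift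
  dsimp only
  split_ifs with h h2 h3
  · exact le_of_lt h2.2
  · rfl
  · exact le_of_lt h3.2
  · rfl

theorem statement5 (ρ1 ρ2 ρ3 : ℝ → ℝ)
    (h1anti : AntitoneOn ρ1 (Set.Ioi 0)) (h1nonneg : ∀ t, 0 < t → 0 ≤ ρ1 t)
    (a1 b1 a2 b2 : ℝ) (ha1 : 1 ≤ a1) (hb1 : 1 ≤ b1) (ha2 : 1 ≤ a2) (hb2 : 1 ≤ b2)
    (h12 : IsApprox a1 b1 ρ1 ρ2) (h23 : IsApprox a2 b2 ρ2 ρ3) :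
    IsApprox (a1 * a2) (b1 * b2) ρ1 ρ3 := by
  obtain ⟨h2anti, h2nn, h2sq⟩ := h12
  obtain ⟨h3anti, h3nn, h3sq⟩ := h23
  refine ⟨h3anti, h3nn, fun t ht => ⟨?_, ((h3sq t ht).2).trans (h2sq t ht).2⟩⟩
  have hb1p : (0:ℝ) < b1 := lt_of_lt_of_le one_pos hb1
  have hb2p : (0:ℝ) < b2 := lt_of_lt_of_le one_pos hb2
  set φ12 : ℝ := if t ≤ 1 then ρ1 (a1 * a2) / (b1 * b2)
      else ρ1 (a1 * a2 * t) / (b1 * b2) with hφ12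
  set φ23 : ℝ := if t ≤ 1 then ρ2 a2 / b2 else ρ2 (a2 * t) / b2 with hφ23
  have key : φ12 ≤ φ23 := by
    by_cases h : t ≤ 1
    · simp only [hφ12, hφ23, if_pos h]
      have ha2p : (0:ℝ) < a2 := lt_of_lt_of_le one_pos ha2
      have h1 := (h2sq a2 ha2p).1
      have h2 : ρ1 (a1 * a2) / b1 ≤ downshift ρ1 a1 b1 a2 := by
        have := phi_le_downshift ρ1 a1 b1 a2
        by_cases h3 : a2 ≤ 1
        · have he : a2 = 1 := le_antisymm h3 ha2
          rw [if_pos h3] at this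
          rw [he] at this ⊢
          simpa using this
        · rwa [if_neg h3] at this
      have h4 : ρ1 (a1 * a2) / b1 ≤ ρ2 a2 := h2.trans h1
      calc ρ1 (a1 * a2) / (b1 * b2) = (ρ1 (a1 * a2) / b1) / b2 := by rw [div_div]
      _ ≤ ρ2 a2 / b2 := (div_le_div_iff_of_pos_right hb2p).2 h4
    · simp only [hφ12, hφ23, if_neg h]
      have ht1 : (1:ℝ) < t := lt_of_not_ge h
      have hsp : (0:ℝ) < a2 * t := by positivity
      have hs1 : ¬ (a2 * t ≤ 1) := by
        push_neg
        calc (1:ℝ) < t := ht1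
        _ = 1 * t := (one_mul t).symm
        _ ≤ a2 * t := by
            apply mul_le_mul_of_nonneg_right ha2 (le_of_lt (lt_trans one_pos ht1))
      have h1 := (h2sq (a2 * t) hsp).1
      have h2 := phi_le_downshift ρ1 a1 b1 (a2 * t)
      rw [if_neg hs1] at h2
      have h4 : ρ1 (a1 * a2 * t) / b1 ≤ ρ2 (a2 * t) := by
        rw [mul_assoc]; exact h2.trans h1
      calc ρ1 (a1 * a2 * t) / (b1 * b2) = (ρ1 (a1 * a2 * t) / b1) / b2 := by rw [div_div]
      _ ≤ ρ2 (a2 * t) / b2 := (div_le_div_iff_of_pos_right hb2p).2 h4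
  have h23d : φ23 ≤ ρ3 t := (phi_le_downshift ρ2 a2 b2 t).trans (h3sq t ht).1
  show (if 0 < φ12 ∧ φ12 < 1 then 1 else φ12) ≤ ρ3 t
  split_ifs with hc
  · by_cases hlt : φ23 < 1
    · have : downshift ρ2 a2 b2 t = 1 := by
        unfold downshift
        dsimp only
        rw [if_pos ⟨lt_of_lt_of_le hc.1 key, hlt⟩]
      exact this ▸ (h3sq t ht).1
    · exact (le_of_not_gt hlt).trans h23d
  · exact key.trans h23d

end
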